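/- There is no single deterministic anonymous algorithm U that elects a leader on all configurations H_m (m ≥ 1), where H_m is the 4-node path a—b—c—d with tags (m, 0, 0, m+1): for any U, if t is the first global round in which the tag-0 nodes transmit, then U fails to elect a leader on H_{t+1}. -/
import Mathlib


/-- No universal deterministic anonymous algorithm elects a leader on all 4-node path
configurations `H_M` with tags `(M, 0, 0, M+1)`: for any algorithm (given by its action
function `act` on histories) and any family of executions `H M` of it on the
configurations `H_M` (in the anonymous synchronous radio model with collision detection
and wakeup tags), if `t` is the first global round in which the tag-0 nodes transmit in
the execution on `H_{t+1}`, then the algorithm fails to elect a leader on `H_{t+1}`: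
at no round does any decision function on histories hold at exactly one node. -/
theorem stmt15 {Msg : Type*} [DecidableEq Msg]
    (act : List (Multiset Msg) → Option Msg)
    (H : ℕ → ℕ → Fin 4 → Option (List (Multiset Msg)))
    (msgs : ℕ → ℕ → Fin 4 → Multiset Msg)
    (hmsgs : ∀ M r v, msgs M r v = Multiset.filterMap (fun u => (H M r u).bind act)
      (Finset.univ.filter (fun u : Fin 4 => v.val + 1 = u.val ∨ u.val + 1 = v.val)).val)
    (hH0 : ∀ M v, H M 0 v = none)
    (hHs : ∀ M r v, H M (r + 1) v =
      match H M r v with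
      | some h => some (msgs M r v :: h)
      | none =>
        if msgs M r v ≠ 0 then some [msgs M r v]
        else if r = (![M, 0, 0, M + 1] : Fin 4 → ℕ) v then some [(0 : Multiset Msg)]
        else none)
    (t : ℕ)
    (hquiet : ∀ r < t, ∀ h, H (t + 1) r 1 = some h → act h = none)
    (htrans : ∃ h, H (t + 1) t 1 = some h ∧ act h ≠ none) :
    ∀ (r : ℕ) (f : List (Multiset Msg) → Bool),
      ¬ ∃! v : Fin 4, ∃ h, H (t + 1) r v = some h ∧ f h = true := by
  classical
  set σ : Fin 4 → Fin 4 := ![3, 2, 1, 0] with hσdef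
  have hneigh : ∀ v : Fin 4,
      (Finset.univ.filter (fun u : Fin 4 => (σ v).val + 1 = u.val ∨ u.val + 1 = (σ v).val)).val
        = Multiset.map σ
          (Finset.univ.filter (fun u : Fin 4 => v.val + 1 = u.val ∨ u.val + 1 = v.val)).val := by
    decide
  -- if histories are σ-symmetric at round r, so are the received message multisets
  have hmsym : ∀ r, (∀ u, H (t + 1) r (σ u) = H (t + 1) r u) →
      ∀ v, msgs (t + 1) r (σ v) = msgs (t + 1) r v := by
    intro r hr v
    rw [hmsgs, hmsgs, hneigh, Multiset.filterMap_map]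
    congr 1
    funext u
    simp only [Function.comp_apply, hr u]
  obtain ⟨h1, hh1, hact1⟩ := htrans
  -- node 0 is awake from round t+1 on
  have hawake0 : ∀ k, (H (t + 1) (t + 1 + k) 0).isSome := by
    intro k
    induction k with
    | zero =>
      have hm : msgs (t + 1) t 0 ≠ 0 := by
        rw [hmsgs]
        have hn : (Finset.univ.filter
            (fun u : Fin 4 => (0 : Fin 4).val + 1 = u.val ∨ u.val + 1 = (0 : Fin 4).val)).val
            = ((1 : Fin 4) ::ₘ 0) := by decide
        rw [hn]
        rcases ho : act h1 with _ | m
        · exact absurd ho hact1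
        · rw [Multiset.filterMap_cons_some _ _ _ (by rw [hh1]; exact ho)]
          simp
      have := hHs (t + 1) t 0
      rw [show t + 1 + 0 = t + 1 from rfl, this]
      cases hc : H (t + 1) t 0 with
      | none => simp [hm]
      | some h => simp
    | succ k ih =>
      rw [show t + 1 + (k + 1) = (t + 1 + k) + 1 from rfl, hHs]
      cases hc : H (t + 1) (t + 1 + k) 0 with
      | none => rw [hc] at ih; simp at ih
      | some h => simp
  have hle : ∀ r, H (t + 1) r 0 = none → r ≤ t := by
    intro r h0
    by_contra hgt
    push_neg at hgt
    obtain ⟨k, hk⟩ : ∃ k, r = t + 1 + k := ⟨r - (t + 1), by omega⟩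
    have := hawake0 k
    rw [← hk, h0] at this
    simp at this
  -- the symmetry of the execution
  have hsym : ∀ r, ∀ u, H (t + 1) r (σ u) = H (t + 1) r u := by
    intro r
    induction r with
    | zero => intro u; rw [hH0, hH0]
    | succ r ih =>
      intro u
      have hm := hmsym r ih
      rw [hHs, hHs, ih u, hm u]
      cases hnone : H (t + 1) r u with
      | some h => simp
      | none =>
        simp only
        by_cases hz : msgs (t + 1) r u = 0
        · simp only [hz, ne_eq, not_true_eq_false, if_false, not_false_eq_true]
          -- both wakeup-tag branches agree
          fin_cases u
          · -- u = 0, σ u = 3, tags t+1 and t+2, but r ≤ t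
            have hrt : r ≤ t := hle r hnone
            rw [if_neg (by simp [hσdef]; omega), if_neg (by simp; omega)]
          · rfl
          · rfl
          · -- u = 3, σ u = 0 ; H r 3 = none and by ih H r 0 = none
            have h0 : H (t + 1) r 0 = none := by
              have h3 := ih 3
              rw [show σ 3 = 0 from rfl] at h3
              rw [h3]; exact hnone
            have hrt : r ≤ t := hle r h0
            rw [if_neg (by simp [hσdef]; omega), if_neg (by simp; omega)]
        · simp [hz]
  have hnofix : ∀ u : Fin 4, σ u ≠ u := by decide
  intro r f ⟨v, hv, huniq⟩
  obtain ⟨h, hHv, hfv⟩ := hv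
  have : σ v = v := huniq (σ v) ⟨h, by rw [hsym r v]; exact hHv, hfv⟩
  exact hnofix v this
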